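/- arXiv:2008.03730 — 2 statements merged into one kernel-verified Lean document; each statement's English description precedes it below -/
import Mathlib

section
/- Let G be a bipartite graph with parts A and B, each of size n ≥ 1, let Δ_A be the maximum degree in G among vertices of A and Δ_B the maximum degree in G among vertices of B. Then β(G) ≥ (1/2)·(1/(Δ_A+1) + 1/(Δ_B+1) + ∑_{v ∈ A ∪ B} 1/(d(v)+1)) − 1. -/
open Finset

/-- The bi-hole number `β(G)` of a bipartite graph `G` with parts `A`, `B`: the largest `k`
such that there are `S ⊆ A`, `T ⊆ B` with `|S| = |T| = k` and no edge of `G` between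
`S` and `T`. -/
noncomputable def biholeNumber {V : Type*} (G : SimpleGraph V) (A B : Finset V) : ℕ :=
  sSup {k | ∃ S T : Finset V, S ⊆ A ∧ T ⊆ B ∧ S.card = k ∧ T.card = k ∧
    ∀ s ∈ S, ∀ t ∈ T, ¬ G.Adj s t}

/-- Core analytic lemma: if `t < ∑_{v ∈ A} 1/g(v) + 1/D` where `g ≥ 1` on `A` and `g ≤ D`
on `A`, then there is a `t`-element subset `S` of `A` with `∑_{v ∈ S} g(v) ≤ |A|`
(take the `t` smallest values). -/
lemma exists_small_subset {V : Type*} [DecidableEq V] (A : Finset V) (g : V → ℕ) (D : ℕ)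
    (hg : ∀ v ∈ A, 1 ≤ g v) (hD : ∀ v ∈ A, g v ≤ D) (t : ℕ) (ht : t ≤ A.card)
    (h : (t : ℝ) < ∑ v ∈ A, 1 / (g v : ℝ) + 1 / (D : ℝ)) :
    ∃ S ⊆ A, S.card = t ∧ ∑ v ∈ S, g v ≤ A.card := by
  rcases Nat.eq_zero_or_pos t with ht0 | ht1
  · exact ⟨∅, by simp [ht0]⟩
  -- choose S of size t minimizing the sum of g
  have hne : (A.powersetCard t).Nonempty := powersetCard_nonempty.mpr ht
  obtain ⟨S, hSmem, hSmin⟩ := Finset.exists_min_image (A.powersetCard t)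
    (fun S => ∑ v ∈ S, g v) hne
  rw [Finset.mem_powersetCard] at hSmem
  obtain ⟨hSA, hScard⟩ := hSmem
  refine ⟨S, hSA, hScard, ?_⟩
  by_contra hP
  push_neg at hP
  have hSne : S.Nonempty := Finset.card_pos.mp (hScard ▸ ht1)
  obtain ⟨u, hu, hgu⟩ := S.exists_mem_eq_sup hSne g
  -- swap argument: any w outside S has g w ≥ g u = max over S
  have hswap : ∀ w ∈ A \ S, g u ≤ g w := by
    intro w hw
    rw [Finset.mem_sdiff] at hw
    obtain ⟨hwA, hwS⟩ := hw
    have hS' : insert w (S.erase u) ∈ A.powersetCard t := by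
      rw [Finset.mem_powersetCard]
      constructor
      · intro x hx
        rcases Finset.mem_insert.mp hx with rfl | hx
        · exact hwA
        · exact hSA (Finset.mem_of_mem_erase hx)
      · rw [Finset.card_insert_of_notMem (fun hc => hwS (Finset.mem_of_mem_erase hc)),
          Finset.card_erase_of_mem hu, hScard]
        omega
    have hmin := hSmin _ hS'
    have hins : ∑ v ∈ insert w (S.erase u), g v = g w + ∑ v ∈ S.erase u, g v :=
      Finset.sum_insert (fun hc => hwS (Finset.mem_of_mem_erase hc))
    have herase : ∑ v ∈ S.erase u, g v + g u = ∑ v ∈ S, g v := Finset.sum_erase_add S g hu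
    simp only [hins] at hmin
    omega
  -- real computations
  have hM1 : (1 : ℝ) ≤ (g u : ℝ) := by exact_mod_cast hg u (hSA hu)
  have hM0 : (0 : ℝ) < (g u : ℝ) := by linarith
  -- each term in S: 1/x ≤ 1 - (x-1)/M
  have hstep1 : ∀ v ∈ S, 1 / (g v : ℝ) ≤ 1 - ((g v : ℝ) - 1) / (g u : ℝ) := by
    intro v hv
    have h1 : (1 : ℝ) ≤ (g v : ℝ) := by exact_mod_cast hg v (hSA hv)
    have h2 : (g v : ℝ) ≤ (g u : ℝ) := by
      have := Finset.le_sup (f := g) hv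
      rw [hgu] at this
      exact_mod_cast this
    have hx0 : (0 : ℝ) < (g v : ℝ) := by linarith
    have key : (0 : ℝ) ≤ ((g v : ℝ) - 1) * ((g u : ℝ) - (g v : ℝ)) := by nlinarith
    have hid : 1 - ((g v : ℝ) - 1) / (g u : ℝ) - 1 / (g v : ℝ)
        = (((g v : ℝ) - 1) * ((g u : ℝ) - (g v : ℝ))) / ((g u : ℝ) * (g v : ℝ)) := by
      field_simp
      ring
    have hnn : (0 : ℝ) ≤ (((g v : ℝ) - 1) * ((g u : ℝ) - (g v : ℝ))) / ((g u : ℝ) * (g v : ℝ)) :=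
      div_nonneg key (by positivity)
    linarith [hid ▸ hnn]
  set P : ℝ := ∑ v ∈ S, (g v : ℝ) with hPdef
  have hsum1 : ∑ v ∈ S, 1 / (g v : ℝ) ≤ (t : ℝ) - (P - t) / (g u : ℝ) := by
    calc ∑ v ∈ S, 1 / (g v : ℝ) ≤ ∑ v ∈ S, (1 - ((g v : ℝ) - 1) / (g u : ℝ)) :=
        Finset.sum_le_sum hstep1
      _ = (t : ℝ) - (P - t) / (g u : ℝ) := by
          rw [Finset.sum_sub_distrib, Finset.sum_const, hScard, ← Finset.sum_div,
            Finset.sum_sub_distrib, Finset.sum_const, hScard]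
          push_cast
          ring
  have hsum2 : ∑ v ∈ A \ S, 1 / (g v : ℝ) ≤ ((A.card : ℝ) - t) / (g u : ℝ) := by
    have hcard : (A \ S).card = A.card - t := by rw [Finset.card_sdiff_of_subset hSA, hScard]
    calc ∑ v ∈ A \ S, 1 / (g v : ℝ) ≤ ∑ _v ∈ A \ S, 1 / (g u : ℝ) := by
          refine Finset.sum_le_sum fun w hw => ?_
          exact one_div_le_one_div_of_le hM0 (by exact_mod_cast hswap w hw)
      _ = ((A \ S).card : ℝ) * (1 / (g u : ℝ)) := by rw [Finset.sum_const, nsmul_eq_mul]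
      _ = ((A.card : ℝ) - t) / (g u : ℝ) := by
          rw [hcard, Nat.cast_sub ht]; ring
  have hD1 : 1 / (D : ℝ) ≤ 1 / (g u : ℝ) := by
    refine one_div_le_one_div_of_le hM0 ?_
    exact_mod_cast hD u (hSA hu)
  have hsplit : ∑ v ∈ A, 1 / (g v : ℝ) = ∑ v ∈ A \ S, 1 / (g v : ℝ) + ∑ v ∈ S, 1 / (g v : ℝ) :=
    (Finset.sum_sdiff hSA).symm
  have hPn : (A.card : ℝ) + 1 ≤ P := by
    have h' : A.card + 1 ≤ ∑ v ∈ S, g v := hP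
    have hcast : ((∑ v ∈ S, g v : ℕ) : ℝ) = P := by rw [hPdef]; push_cast; rfl
    calc (A.card : ℝ) + 1 = ((A.card + 1 : ℕ) : ℝ) := by push_cast; ring
      _ ≤ ((∑ v ∈ S, g v : ℕ) : ℝ) := by exact_mod_cast h'
      _ = P := hcast
  have hfinal : ∑ v ∈ A, 1 / (g v : ℝ) + 1 / (D : ℝ) ≤ (t : ℝ) := by
    have hneg : ((A.card : ℝ) + 1 - P) / (g u : ℝ) ≤ 0 :=
      div_nonpos_of_nonpos_of_nonneg (by linarith) (le_of_lt hM0)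
    have hle : ∑ v ∈ A, 1 / (g v : ℝ) + 1 / (D : ℝ) ≤
        ((A.card : ℝ) - t) / (g u : ℝ) + ((t : ℝ) - (P - t) / (g u : ℝ)) + 1 / (g u : ℝ) := by
      rw [hsplit]; linarith
    have heq : ((A.card : ℝ) - t) / (g u : ℝ) + ((t : ℝ) - (P - t) / (g u : ℝ)) + 1 / (g u : ℝ)
        = (t : ℝ) + ((A.card : ℝ) + 1 - P) / (g u : ℝ) := by ring
    linarith [heq ▸ hle]
  exact absurd h (not_lt.mpr hfinal)

/-- From a set `S` on one side with small total (degree+1), build an opposite set `T`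
of the same size with no edges to `S`. -/
lemma exists_opposite_set {V : Type*} [Fintype V] [DecidableEq V] (G : SimpleGraph V)
    [DecidableRel G.Adj] (Y : Finset V) (t : ℕ) (S : Finset V) (hScard : S.card = t)
    (hsum : ∑ v ∈ S, (G.degree v + 1) ≤ Y.card) :
    ∃ T ⊆ Y, T.card = t ∧ ∀ s ∈ S, ∀ u ∈ T, ¬ G.Adj s u := by
  set U := S.biUnion (fun v => G.neighborFinset v) with hU
  have hUcard : U.card ≤ ∑ v ∈ S, G.degree v := by
    calc U.card ≤ ∑ v ∈ S, (G.neighborFinset v).card := Finset.card_biUnion_le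
      _ = ∑ v ∈ S, G.degree v := by
          simp [SimpleGraph.card_neighborFinset_eq_degree]
  have hsum' : ∑ v ∈ S, G.degree v + t ≤ Y.card := by
    have : ∑ v ∈ S, (G.degree v + 1) = ∑ v ∈ S, G.degree v + S.card := by
      rw [Finset.sum_add_distrib, Finset.sum_const, smul_eq_mul, mul_one]
    omega
  have ht : t ≤ (Y \ U).card := by
    have h1 : Y.card - U.card ≤ (Y \ U).card := le_card_sdiff U Y
    omega
  obtain ⟨T, hTsub, hTcard⟩ := (Y \ U).exists_subset_card_eq ht
  refine ⟨T, fun v hv => (Finset.mem_sdiff.mp (hTsub hv)).1, hTcard, ?_⟩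
  intro s hs u hu hadj
  have huU : u ∈ U := Finset.mem_biUnion.mpr ⟨s, hs, (G.mem_neighborFinset s u).mpr hadj⟩
  exact (Finset.mem_sdiff.mp (hTsub hu)).2 huU

/-- A witnessing pair gives a lower bound on the bi-hole number. -/
lemma le_biholeNumber {V : Type*} [Fintype V] (G : SimpleGraph V) (A B : Finset V)
    (k : ℕ) (S T : Finset V) (hS : S ⊆ A) (hT : T ⊆ B) (hSc : S.card = k) (hTc : T.card = k)
    (hadj : ∀ s ∈ S, ∀ t ∈ T, ¬ G.Adj s t) : k ≤ biholeNumber G A B := by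
  apply le_csSup
  · refine ⟨A.card, ?_⟩
    rintro m ⟨S', T', hS', hT', hSc', hTc', -⟩
    exact hSc' ▸ Finset.card_le_card hS'
  · exact ⟨S, T, hS, hT, hSc, hTc, hadj⟩

/-- For an `n × n` bipartite graph `G` (with `n ≥ 1`), with `Δ_A` and `Δ_B`
the maximum degrees on the two sides,
`β(G) ≥ (1/2)·(1/(Δ_A+1) + 1/(Δ_B+1) + ∑_{v ∈ A ∪ B} 1/(d(v)+1)) − 1`. -/
theorem bihole_caro_wei_strong {V : Type*} [Fintype V] [DecidableEq V]
    (G : SimpleGraph V) [DecidableRel G.Adj] (n : ℕ) (hn : 1 ≤ n) (A B : Finset V)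
    (hdisj : Disjoint A B) (hcover : A ∪ B = Finset.univ)
    (hbip : ∀ u v, G.Adj u v → (u ∈ A ∧ v ∈ B) ∨ (u ∈ B ∧ v ∈ A))
    (hA : A.card = n) (hB : B.card = n) :
    (1 / 2 : ℝ) * ((1 : ℝ) / ((A.sup (fun v => G.degree v) : ℕ) + 1) + (1 : ℝ) / ((B.sup (fun v => G.degree v) : ℕ) + 1)
        + ∑ v ∈ A ∪ B, (1 : ℝ) / (G.degree v + 1)) - 1
      ≤ (biholeNumber G A B : ℝ) := by
  classical
  set g : V → ℕ := fun v => G.degree v + 1 with hgdef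
  set cA : ℝ := ∑ v ∈ A, (1 : ℝ) / (G.degree v + 1) with hcA
  set cB : ℝ := ∑ v ∈ B, (1 : ℝ) / (G.degree v + 1) with hcB
  set eA : ℝ := (1 : ℝ) / ((A.sup (fun v => G.degree v) : ℕ) + 1) with heA
  set eB : ℝ := (1 : ℝ) / ((B.sup (fun v => G.degree v) : ℕ) + 1) with heB
  have hsum_union : ∑ v ∈ A ∪ B, (1 : ℝ) / (G.degree v + 1) = cA + cB :=
    Finset.sum_union hdisj
  set M : ℝ := max (cA + eA) (cB + eB) with hM
  -- positivity and upper bounds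
  have hterm_pos : ∀ v : V, (0 : ℝ) < (1 : ℝ) / (G.degree v + 1) := by
    intro v; positivity
  have hterm_le : ∀ v : V, (1 : ℝ) / (G.degree v + 1) ≤ 1 := by
    intro v
    rw [div_le_one (by positivity)]
    have : (0 : ℝ) ≤ (G.degree v : ℝ) := Nat.cast_nonneg _
    linarith
  have hcA_le : cA ≤ n := by
    calc cA ≤ ∑ _v ∈ A, (1 : ℝ) := Finset.sum_le_sum fun v _ => hterm_le v
      _ = n := by rw [Finset.sum_const, hA, nsmul_eq_mul, mul_one]
  have hcB_le : cB ≤ n := by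
    calc cB ≤ ∑ _v ∈ B, (1 : ℝ) := Finset.sum_le_sum fun v _ => hterm_le v
      _ = n := by rw [Finset.sum_const, hB, nsmul_eq_mul, mul_one]
  have heA_pos : (0 : ℝ) < eA := by rw [heA]; positivity
  have heB_pos : (0 : ℝ) < eB := by rw [heB]; positivity
  have heA_le : eA ≤ 1 := by
    rw [heA, div_le_one (by positivity)]
    have : (0 : ℝ) ≤ ((A.sup (fun v => G.degree v) : ℕ) : ℝ) := Nat.cast_nonneg _
    linarith
  have heB_le : eB ≤ 1 := by
    rw [heB, div_le_one (by positivity)]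
    have : (0 : ℝ) ≤ ((B.sup (fun v => G.degree v) : ℕ) : ℝ) := Nat.cast_nonneg _
    linarith
  have hAne : A.Nonempty := Finset.card_pos.mp (by omega)
  have hBne : B.Nonempty := Finset.card_pos.mp (by omega)
  have hM_pos : 0 < M := lt_of_lt_of_le (by
      have : (0:ℝ) < cA + eA := by
        have : (0:ℝ) < cA :=
          Finset.sum_pos (fun v _ => hterm_pos v) hAne
        linarith
      exact this) (le_max_left _ _)
  set t : ℕ := ⌈M⌉₊ - 1 with htdef
  have hceil1 : 1 ≤ ⌈M⌉₊ := Nat.one_le_ceil_iff.mpr hM_pos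
  have ht_ge : M - 1 ≤ (t : ℝ) := by
    have h1 : M ≤ (⌈M⌉₊ : ℝ) := Nat.le_ceil M
    have h2 : ((t : ℕ) : ℝ) = (⌈M⌉₊ : ℝ) - 1 := by
      rw [htdef, Nat.cast_sub hceil1, Nat.cast_one]
    linarith
  have ht_lt : (t : ℝ) < M := by
    have h1 : (⌈M⌉₊ : ℝ) < M + 1 := Nat.ceil_lt_add_one (le_of_lt hM_pos)
    have h2 : ((t : ℕ) : ℝ) = (⌈M⌉₊ : ℝ) - 1 := by
      rw [htdef, Nat.cast_sub hceil1, Nat.cast_one]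
    linarith
  have ht_le_n : t ≤ n := by
    have hMn : M ≤ (n : ℝ) + 1 := by
      rw [hM]
      exact max_le (by linarith) (by linarith)
    have : (t : ℝ) < (n : ℝ) + 1 := lt_of_lt_of_le ht_lt hMn
    exact_mod_cast Nat.lt_add_one_iff.mp (by exact_mod_cast this)
  -- helper to apply the core lemma to a side
  have hside : ∀ (X Y : Finset V), X.card = n → Y.card = n →
      (t : ℝ) < (∑ v ∈ X, (1 : ℝ) / (G.degree v + 1)) +
        (1 : ℝ) / ((X.sup (fun v => G.degree v) : ℕ) + 1) →
      ∃ S T : Finset V, S ⊆ X ∧ T ⊆ Y ∧ S.card = t ∧ T.card = t ∧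
        ∀ s ∈ S, ∀ u ∈ T, ¬ G.Adj s u := by
    intro X Y hX hY hlt
    have hg1 : ∀ v ∈ X, 1 ≤ g v := fun v _ => by simp [hgdef]
    have hgD : ∀ v ∈ X, g v ≤ X.sup (fun v => G.degree v) + 1 := by
      intro v hv
      have h' := Finset.le_sup (f := fun v => G.degree v) hv
      simp only [hgdef]
      omega
    have hlt' : (t : ℝ) < ∑ v ∈ X, 1 / (g v : ℝ) +
        1 / ((X.sup (fun v => G.degree v) + 1 : ℕ) : ℝ) := by
      have e1 : ∑ v ∈ X, 1 / (g v : ℝ) = ∑ v ∈ X, (1 : ℝ) / (G.degree v + 1) := by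
        refine Finset.sum_congr rfl fun v _ => ?_
        simp only [hgdef]
        push_cast
        ring
      have e2 : ((X.sup (fun v => G.degree v) + 1 : ℕ) : ℝ)
          = ((X.sup (fun v => G.degree v) : ℕ) : ℝ) + 1 := by push_cast; ring
      rw [e1, e2]
      exact hlt
    obtain ⟨S, hSX, hScard, hSsum⟩ := exists_small_subset X g
      (X.sup (fun v => G.degree v) + 1) hg1 hgD t (by omega) hlt'
    have hSsum' : ∑ v ∈ S, (G.degree v + 1) ≤ Y.card := by
      simp only [hgdef] at hSsum
      omega
    obtain ⟨T, hTY, hTcard, hadj⟩ := exists_opposite_set G Y t S hScard hSsum'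
    exact ⟨S, T, hSX, hTY, hScard, hTcard, hadj⟩
  -- get the bi-hole of size t
  have hbihole : t ≤ biholeNumber G A B := by
    rcases max_cases (cA + eA) (cB + eB) with ⟨hMeq, _⟩ | ⟨hMeq, _⟩
    · obtain ⟨S, T, hS, hT, hSc, hTc, hadj⟩ := hside A B hA hB (by
        rw [← hcA, ← heA]; rw [hM, hMeq] at ht_lt; exact ht_lt)
      exact le_biholeNumber G A B t S T hS hT hSc hTc hadj
    · obtain ⟨S, T, hS, hT, hSc, hTc, hadj⟩ := hside B A hB hA (by
        rw [← hcB, ← heB]; rw [hM, hMeq] at ht_lt; exact ht_lt)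
      exact le_biholeNumber G A B t T S hT hS hTc hSc
        (fun s hs u hu hadj' => hadj u hu s hs hadj'.symm)
  have hfin : (t : ℝ) ≤ (biholeNumber G A B : ℝ) := by exact_mod_cast hbihole
  have havg : (1 / 2 : ℝ) * (eA + eB + (cA + cB)) - 1 ≤ M - 1 := by
    have h1 : cA + eA ≤ M := le_max_left _ _
    have h2 : cB + eB ≤ M := le_max_right _ _
    linarith
  rw [hsum_union]
  linarith
end

section
/- Let G be a bipartite graph with parts A and B, each of size n, and let d̄ = (∑_{v ∈ A ∪ B} d(v))/(2n) be the average degree of G. Then β(G) ≥ n/(d̄+1) − 2. -/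
open Finset

/-- A lower set of size `t` for `f` exists inside any finset. -/
lemma exists_lowerset {V : Type*} [DecidableEq V] (X : Finset V) (f : V → ℕ) :
    ∀ t, t ≤ X.card → ∃ S, S ⊆ X ∧ S.card = t ∧ ∀ s ∈ S, ∀ x ∈ X \ S, f s ≤ f x := by
  intro t
  induction t with
  | zero => exact fun _ => ⟨∅, by simp⟩
  | succ t ih =>
    intro ht
    obtain ⟨S, hSX, hcard, hlow⟩ := ih (Nat.le_of_succ_le ht)
    have hne : (X \ S).Nonempty := by
      rw [← Finset.card_pos, Finset.card_sdiff_of_subset hSX, hcard]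
      omega
    obtain ⟨m, hm, hmin⟩ := Finset.exists_min_image (X \ S) f hne
    have hmX : m ∈ X := (Finset.mem_sdiff.mp hm).1
    have hmS : m ∉ S := (Finset.mem_sdiff.mp hm).2
    refine ⟨insert m S, ?_, ?_, ?_⟩
    · exact Finset.insert_subset hmX hSX
    · rw [Finset.card_insert_of_notMem hmS, hcard]
    · intro s hs x hx
      have hx' : x ∈ X \ S := by
        rw [Finset.mem_sdiff] at hx ⊢
        exact ⟨hx.1, fun h => hx.2 (Finset.mem_insert_of_mem h)⟩
      rcases Finset.mem_insert.mp hs with rfl | hs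
      · exact hmin x hx'
      · exact hlow s hs x hx'

/-- The average over a lower set is at most the overall average. -/
lemma lowerset_sum {V : Type*} [DecidableEq V] (X S : Finset V) (f : V → ℕ)
    (hS : S ⊆ X) (hlow : ∀ s ∈ S, ∀ x ∈ X \ S, f s ≤ f x) :
    X.card * ∑ s ∈ S, f s ≤ S.card * ∑ x ∈ X, f x := by
  have hsplit : ∑ x ∈ X \ S, f x + ∑ s ∈ S, f s = ∑ x ∈ X, f x := Finset.sum_sdiff hS
  have hkey : (X \ S).card * ∑ s ∈ S, f s ≤ S.card * ∑ x ∈ X \ S, f x := by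
    calc (X \ S).card * ∑ s ∈ S, f s = ∑ s ∈ S, ∑ _x ∈ X \ S, f s := by
          rw [Finset.mul_sum]; congr 1; ext s; rw [Finset.sum_const, smul_eq_mul]
      _ ≤ ∑ s ∈ S, ∑ x ∈ X \ S, f x := by
          refine Finset.sum_le_sum fun s hs => Finset.sum_le_sum fun x hx => hlow s hs x hx
      _ = S.card * ∑ x ∈ X \ S, f x := by rw [Finset.sum_const, smul_eq_mul]
  have hc : X.card = S.card + (X \ S).card := by
    have := Finset.card_le_card hS
    rw [Finset.card_sdiff_of_subset hS]; omega
  calc X.card * ∑ s ∈ S, f s = S.card * ∑ s ∈ S, f s + (X \ S).card * ∑ s ∈ S, f s := by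
        rw [hc, add_mul]
    _ ≤ S.card * ∑ s ∈ S, f s + S.card * ∑ x ∈ X \ S, f x := Nat.add_le_add le_rfl hkey
    _ = S.card * ∑ x ∈ X, f x := by rw [← mul_add, add_comm (∑ s ∈ S, f s), hsplit]

open Classical in
/-- If `t` is small enough compared to the degree sum on side `X`, there is a bi-hole
with `S ⊆ X`, `T ⊆ Y` of size `t`. -/
lemma bihole_exists {V : Type*} [Fintype V] [DecidableEq V] (G : SimpleGraph V)
    [DecidableRel G.Adj] (X Y : Finset V) (t : ℕ) (ht : t ≤ X.card)
    (hYX : X.card ≤ Y.card)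
    (hsum : X.card * t + t * ∑ v ∈ X, G.degree v ≤ X.card * X.card) :
    ∃ S T : Finset V, S ⊆ X ∧ T ⊆ Y ∧ S.card = t ∧ T.card = t ∧
      ∀ s ∈ S, ∀ y ∈ T, ¬ G.Adj s y := by
  rcases Nat.eq_zero_or_pos X.card with h0 | hpos
  · have : t = 0 := by omega
    subst this
    exact ⟨∅, ∅, by simp⟩
  obtain ⟨S, hSX, hScard, hlow⟩ := exists_lowerset X (fun v => G.degree v) t ht
  have hSsum : X.card * ∑ s ∈ S, G.degree s ≤ t * ∑ v ∈ X, G.degree v := by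
    have := lowerset_sum X S (fun v => G.degree v) hSX hlow
    rwa [hScard] at this
  -- t + ∑_S deg ≤ X.card
  have hkey : t + ∑ s ∈ S, G.degree s ≤ X.card := by
    have h1 : X.card * (t + ∑ s ∈ S, G.degree s) ≤ X.card * X.card := by
      rw [Nat.mul_add]
      calc X.card * t + X.card * ∑ s ∈ S, G.degree s
          ≤ X.card * t + t * ∑ v ∈ X, G.degree v := Nat.add_le_add le_rfl hSsum
        _ ≤ X.card * X.card := hsum
    exact Nat.le_of_mul_le_mul_left h1 hpos
  set N : Finset V := Y.filter (fun y => ∃ s ∈ S, G.Adj s y) with hN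
  have hNcard : N.card ≤ ∑ s ∈ S, G.degree s := by
    have hsub : N ⊆ S.biUnion (fun s => G.neighborFinset s) := by
      intro y hy
      rw [hN, Finset.mem_filter] at hy
      obtain ⟨s, hs, hadj⟩ := hy.2
      exact Finset.mem_biUnion.mpr ⟨s, hs, (SimpleGraph.mem_neighborFinset G s y).mpr hadj⟩
    calc N.card ≤ (S.biUnion (fun s => G.neighborFinset s)).card := Finset.card_le_card hsub
      _ ≤ ∑ s ∈ S, (G.neighborFinset s).card := Finset.card_biUnion_le
      _ = ∑ s ∈ S, G.degree s := by simp [SimpleGraph.card_neighborFinset_eq_degree]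
  have hNY : N ⊆ Y := Finset.filter_subset _ _
  have hT : t ≤ (Y \ N).card := by
    rw [Finset.card_sdiff_of_subset hNY]
    have := Finset.card_le_card hNY
    omega
  obtain ⟨T, hTsub, hTcard⟩ := Finset.exists_subset_card_eq hT
  refine ⟨S, T, hSX, hTsub.trans (Finset.sdiff_subset), hScard, hTcard, ?_⟩
  intro s hs y hy hadj
  have hyY : y ∈ Y := (hTsub.trans Finset.sdiff_subset) hy
  have : y ∈ N := by rw [hN, Finset.mem_filter]; exact ⟨hyY, s, hs, hadj⟩
  exact (Finset.mem_sdiff.mp (hTsub hy)).2 this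

/-- For an `n × n` bipartite graph `G` with average degree
`d̄ = (∑_{v ∈ A ∪ B} d(v)) / (2n)`, we have `β(G) ≥ n/(d̄+1) − 2`. -/
theorem bihole_average_degree {V : Type*} [Fintype V] [DecidableEq V]
    (G : SimpleGraph V) [DecidableRel G.Adj] (n : ℕ) (A B : Finset V)
    (hdisj : Disjoint A B) (hcover : A ∪ B = Finset.univ)
    (hbip : ∀ u v, G.Adj u v → (u ∈ A ∧ v ∈ B) ∨ (u ∈ B ∧ v ∈ A))
    (hA : A.card = n) (hB : B.card = n)
    (dbar : ℝ) (hdbar : dbar = (∑ v ∈ A ∪ B, (G.degree v : ℝ)) / (2 * n)) :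
    (n : ℝ) / (dbar + 1) - 2 ≤ (biholeNumber G A B : ℝ) := by
  have hβ0 : (0 : ℝ) ≤ (biholeNumber G A B : ℝ) := Nat.cast_nonneg _
  rcases Nat.eq_zero_or_pos n with h0 | hpos
  · subst h0
    simp only [Nat.cast_zero, zero_div]
    linarith
  have hnR : (0 : ℝ) < (n : ℝ) := by exact_mod_cast hpos
  -- dbar ≥ 0
  have hsum_nonneg : (0:ℝ) ≤ ∑ v ∈ A ∪ B, (G.degree v : ℝ) :=
    Finset.sum_nonneg fun v _ => Nat.cast_nonneg _
  have hd0 : (0:ℝ) ≤ dbar := by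
    rw [hdbar]; positivity
  have hd1 : (0:ℝ) < dbar + 1 := by linarith
  set x : ℝ := (n : ℝ) / (dbar + 1) with hx
  have hx0 : 0 ≤ x := by positivity
  set t : ℕ := ⌊x⌋₊ with htdef
  have htx : (t : ℝ) ≤ x := Nat.floor_le hx0
  have hxn : x ≤ (n : ℝ) := by
    rw [hx, div_le_iff₀ hd1]; nlinarith
  have htn : t ≤ n := by
    have : (t : ℝ) ≤ (n : ℝ) := htx.trans hxn
    exact_mod_cast this
  -- total degree sum
  have htot : ∑ v ∈ A ∪ B, (G.degree v : ℝ) = dbar * (2 * n) := by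
    rw [hdbar, div_mul_cancel₀]
    positivity
  have hsplit : ∑ v ∈ A, (G.degree v : ℝ) + ∑ v ∈ B, (G.degree v : ℝ)
      = dbar * (2 * n) := by
    rw [← Finset.sum_union hdisj, htot]
  -- pick the side with smaller degree sum
  have hmain : ∀ X Y : Finset V, X.card = n → Y.card = n →
      ∑ v ∈ X, (G.degree v : ℝ) ≤ (n : ℝ) * dbar →
      ∃ S T : Finset V, S ⊆ X ∧ T ⊆ Y ∧ S.card = t ∧ T.card = t ∧
        ∀ s ∈ S, ∀ y ∈ T, ¬ G.Adj s y := by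
    intro X Y hXc hYc hXs
    apply bihole_exists G X Y t (by omega) (by omega)
    have hr : ((X.card * t + t * ∑ v ∈ X, G.degree v : ℕ) : ℝ)
        ≤ ((X.card * X.card : ℕ) : ℝ) := by
      push_cast
      rw [hXc]
      have h1 : (t : ℝ) * ∑ v ∈ X, (G.degree v : ℝ) ≤ (t : ℝ) * ((n:ℝ) * dbar) := by
        apply mul_le_mul_of_nonneg_left hXs (Nat.cast_nonneg _)
      have h2 : (t : ℝ) * (dbar + 1) ≤ (n : ℝ) := by
        calc (t : ℝ) * (dbar + 1) ≤ x * (dbar + 1) := by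
              apply mul_le_mul_of_nonneg_right htx (le_of_lt hd1)
          _ = (n : ℝ) := by rw [hx, div_mul_cancel₀]; exact ne_of_gt hd1
      nlinarith
    exact_mod_cast hr
  -- t is in the bi-hole set
  have hmem : t ∈ {k | ∃ S T : Finset V, S ⊆ A ∧ T ⊆ B ∧ S.card = k ∧ T.card = k ∧
      ∀ s ∈ S, ∀ y ∈ T, ¬ G.Adj s y} := by
    rcases le_total (∑ v ∈ A, (G.degree v : ℝ)) (∑ v ∈ B, (G.degree v : ℝ)) with hle | hle
    · obtain ⟨S, T, h1, h2, h3, h4, h5⟩ := hmain A B hA hB (by nlinarith)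
      exact ⟨S, T, h1, h2, h3, h4, h5⟩
    · obtain ⟨S, T, h1, h2, h3, h4, h5⟩ := hmain B A hB hA (by nlinarith)
      exact ⟨T, S, h2, h1, h4, h3, fun s hs y hy hadj => h5 y hy s hs hadj.symm⟩
  have hbdd : BddAbove {k | ∃ S T : Finset V, S ⊆ A ∧ T ⊆ B ∧ S.card = k ∧ T.card = k ∧
      ∀ s ∈ S, ∀ y ∈ T, ¬ G.Adj s y} := by
    refine ⟨n, fun k hk => ?_⟩
    obtain ⟨S, T, h1, _, h3, _, _⟩ := hk
    rw [← h3, ← hA]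
    exact Finset.card_le_card h1
  have hle : t ≤ biholeNumber G A B := le_csSup hbdd hmem
  have hfloor : x < (t : ℝ) + 1 := Nat.lt_floor_add_one x
  have : (t : ℝ) ≤ (biholeNumber G A B : ℝ) := by exact_mod_cast hle
  linarith
end
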